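/- Let K and H be groups, φ : K → Aut(H) a homomorphism, and G = H ⋊_φ K the semidirect product. Let J_K ∈ ℂ[K] ⊗ ℂ[K] be a twist for ℂ[K], and let J_H ∈ ℂ[H] ⊗ ℂ[H] be a twist for ℂ[H] which is invariant under φ(K), i.e. (φ(k) ⊗ φ(k))(J_H) = J_H for all k ∈ K (with φ(k) extended ℂ-linearly to ℂ[H]). Regard J_K and J_H as elements of ℂ[G] ⊗ ℂ[G] via the subgroup embeddings K ↪ G and H ↪ G. Then the product J_H · J_K is a twist for ℂ[G]. (This is the inductive step of the paper's Proposition 2.4: for a twist hierarchy J₁, ..., J_n on groups G₁ = H₁, G_i = G_{i-1} ⋉ H_i, with each J_i a twist for ℂ[H_i] invariant under ρ_{i-1}(G_{i-1}), the element J̄ = J_n ⋯ J₁ is a twist for ℂ[G_n].) -/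

import Mathlib

set_option synthInstance.maxHeartbeats 1000000
set_option maxHeartbeats 4000000


open TensorProduct

noncomputable section

variable (G : Type*) [Group G]

/-- Comultiplication on the group algebra `ℂ[G]`, determined by `Δ(g) = g ⊗ g`. -/
def GroupAlgebra.comul :
    MonoidAlgebra ℂ G →ₐ[ℂ] MonoidAlgebra ℂ G ⊗[ℂ] MonoidAlgebra ℂ G :=
  (MonoidAlgebra.lift ℂ _ G)
    { toFun := fun g => MonoidAlgebra.of ℂ G g ⊗ₜ[ℂ] MonoidAlgebra.of ℂ G g
      map_one' := by simp [Algebra.TensorProduct.one_def, MonoidAlgebra.one_def]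
      map_mul' := fun g h => by simp [Algebra.TensorProduct.tmul_mul_tmul] }

/-- Counit on the group algebra `ℂ[G]`, determined by `ε(g) = 1`. -/
def GroupAlgebra.counit : MonoidAlgebra ℂ G →ₐ[ℂ] ℂ :=
  (MonoidAlgebra.lift ℂ ℂ G) 1

/-- The equation `((Δ ⊗ id)(J))·(J ⊗ 1) = ((id ⊗ Δ)(J))·(1 ⊗ J)` in `ℂ[G] ⊗ ℂ[G] ⊗ ℂ[G]`. -/
def GroupAlgebra.TwistEq (J : MonoidAlgebra ℂ G ⊗[ℂ] MonoidAlgebra ℂ G) : Prop :=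
  (Algebra.TensorProduct.assoc ℂ ℂ ℂ (MonoidAlgebra ℂ G) (MonoidAlgebra ℂ G) (MonoidAlgebra ℂ G))
      ((Algebra.TensorProduct.map (GroupAlgebra.comul G) (AlgHom.id ℂ (MonoidAlgebra ℂ G))) J) *
    (Algebra.TensorProduct.assoc ℂ ℂ ℂ (MonoidAlgebra ℂ G) (MonoidAlgebra ℂ G) (MonoidAlgebra ℂ G))
      (J ⊗ₜ[ℂ] (1 : MonoidAlgebra ℂ G)) =
  (Algebra.TensorProduct.map (AlgHom.id ℂ (MonoidAlgebra ℂ G)) (GroupAlgebra.comul G)) J *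
    ((1 : MonoidAlgebra ℂ G) ⊗ₜ[ℂ] J)

/-- The equations `(ε ⊗ id)(J) = 1` and `(id ⊗ ε)(J) = 1`. -/
def GroupAlgebra.CounitEq (J : MonoidAlgebra ℂ G ⊗[ℂ] MonoidAlgebra ℂ G) : Prop :=
  (Algebra.TensorProduct.lid ℂ (MonoidAlgebra ℂ G))
      ((Algebra.TensorProduct.map (GroupAlgebra.counit G) (AlgHom.id ℂ (MonoidAlgebra ℂ G))) J) = 1 ∧
  (Algebra.TensorProduct.rid ℂ ℂ (MonoidAlgebra ℂ G))
      ((Algebra.TensorProduct.map (AlgHom.id ℂ (MonoidAlgebra ℂ G)) (GroupAlgebra.counit G)) J) = 1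

/-- A twist for the group algebra `ℂ[G]`: an invertible element of `ℂ[G] ⊗ ℂ[G]` satisfying
`((Δ ⊗ id)(J))·(J ⊗ 1) = ((id ⊗ Δ)(J))·(1 ⊗ J)` and `(ε ⊗ id)(J) = (id ⊗ ε)(J) = 1`. -/
def GroupAlgebra.IsTwist (J : MonoidAlgebra ℂ G ⊗[ℂ] MonoidAlgebra ℂ G) : Prop :=
  IsUnit J ∧ GroupAlgebra.TwistEq G J ∧ GroupAlgebra.CounitEq G J

end

/-- The `ℂ`-linear map `ℂ[A] → ℂ[G]` sending the basis element `a` to `p a`. -/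
noncomputable def GroupAlgebra.transport (A G : Type*) [Group A] [Group G] (p : A → G) :
    MonoidAlgebra ℂ A →ₗ[ℂ] MonoidAlgebra ℂ G :=
  MonoidAlgebra.mapDomainLinearMap ℂ ℂ p

/-! ### Auxiliary lemmas -/

noncomputable section Aux

namespace TwistAux

variable {R A B C A' B' C' : Type*} [CommSemiring R] [Semiring A] [Semiring B] [Semiring C]
  [Semiring A'] [Semiring B'] [Semiring C'] [Algebra R A] [Algebra R B] [Algebra R C]
  [Algebra R A'] [Algebra R B'] [Algebra R C']

lemma algmap_eq (f : A →ₐ[R] A') (g : B →ₐ[R] B') (x : A ⊗[R] B) :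
    Algebra.TensorProduct.map f g x = TensorProduct.map f.toLinearMap g.toLinearMap x := rfl

lemma algassoc_eq (x : (A ⊗[R] B) ⊗[R] C) :
    Algebra.TensorProduct.assoc R R R A B C x = TensorProduct.assoc R A B C x := rfl

lemma assoc_nat (f : A →ₐ[R] A') (g : B →ₐ[R] B') (h : C →ₐ[R] C') (x : (A ⊗[R] B) ⊗[R] C) :
    Algebra.TensorProduct.assoc R R R A' B' C'
        (Algebra.TensorProduct.map (Algebra.TensorProduct.map f g) h x) =
      Algebra.TensorProduct.map f (Algebra.TensorProduct.map g h)
        (Algebra.TensorProduct.assoc R R R A B C x) := by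
  rw [algmap_eq, algmap_eq, algassoc_eq, algassoc_eq,
    show (Algebra.TensorProduct.map f g).toLinearMap
      = TensorProduct.map f.toLinearMap g.toLinearMap from rfl,
    show (Algebra.TensorProduct.map g h).toLinearMap
      = TensorProduct.map g.toLinearMap h.toLinearMap from rfl,
    TensorProduct.map_map_assoc]

lemma lid_nat (f : A →ₐ[R] A') (x : R ⊗[R] A) :
    Algebra.TensorProduct.lid R A' (Algebra.TensorProduct.map (AlgHom.id R R) f x) =
      f (Algebra.TensorProduct.lid R A x) := by
  induction x with
  | zero => simp
  | tmul r a => simp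
  | add x y hx hy => simp [hx, hy]

lemma rid_nat (f : A →ₐ[R] A') (x : A ⊗[R] R) :
    Algebra.TensorProduct.rid R R A' (Algebra.TensorProduct.map f (AlgHom.id R R) x) =
      f (Algebra.TensorProduct.rid R R A x) := by
  induction x with
  | zero => simp
  | tmul a r => simp
  | add x y hx hy => simp [hx, hy]

lemma swap_middle {M : Type*} [Monoid M] (a b c d : M) (h : b * c = c * b) :
    a * b * (c * d) = a * c * (b * d) := by
  rw [mul_assoc, ← mul_assoc b c d, h, mul_assoc c b d, ← mul_assoc]

end TwistAux

section GroupHoms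

variable {A G : Type*} [Group A] [Group G] (f : A →* G)

lemma comul_single (g : G) (c : ℂ) :
    GroupAlgebra.comul G (MonoidAlgebra.single g c) =
      MonoidAlgebra.single g c ⊗ₜ[ℂ] MonoidAlgebra.single g 1 := by
  simp [GroupAlgebra.comul, MonoidAlgebra.lift_single, MonoidAlgebra.of_apply,
    TensorProduct.smul_tmul', MonoidAlgebra.smul_single']

lemma mapDomainAlgHom_single (a : A) (c : ℂ) :
    MonoidAlgebra.mapDomainAlgHom ℂ ℂ f (MonoidAlgebra.single a c) =
      MonoidAlgebra.single (f a) c := by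
  simp [MonoidAlgebra.mapDomainAlgHom, Finsupp.mapDomain_single]

lemma comul_comp :
    (GroupAlgebra.comul G).comp (MonoidAlgebra.mapDomainAlgHom ℂ ℂ f) =
      (Algebra.TensorProduct.map (MonoidAlgebra.mapDomainAlgHom ℂ ℂ f)
        (MonoidAlgebra.mapDomainAlgHom ℂ ℂ f)).comp (GroupAlgebra.comul A) := by
  refine MonoidAlgebra.algHom_ext ?_ (Subsingleton.elim _ _)
  intro a
  simp [comul_single, mapDomainAlgHom_single, MonoidAlgebra.of_apply]

lemma counit_comp :
    (GroupAlgebra.counit G).comp (MonoidAlgebra.mapDomainAlgHom ℂ ℂ f) =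
      GroupAlgebra.counit A := by
  refine MonoidAlgebra.algHom_ext ?_ (Subsingleton.elim _ _)
  intro a
  simp [GroupAlgebra.counit, mapDomainAlgHom_single, MonoidAlgebra.of_apply,
    MonoidAlgebra.lift_single]

variable {J : MonoidAlgebra ℂ A ⊗[ℂ] MonoidAlgebra ℂ A}

local notation "F" => MonoidAlgebra.mapDomainAlgHom ℂ ℂ f
local notation "F2" => Algebra.TensorProduct.map (MonoidAlgebra.mapDomainAlgHom ℂ ℂ f)
  (MonoidAlgebra.mapDomainAlgHom ℂ ℂ f)

lemma twistEq_map (hJ : GroupAlgebra.TwistEq A J) : GroupAlgebra.TwistEq G (F2 J) := by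
  unfold GroupAlgebra.TwistEq at hJ ⊢
  have h1 : (Algebra.TensorProduct.map (GroupAlgebra.comul G) (AlgHom.id ℂ _)) (F2 J) =
      (Algebra.TensorProduct.map F2 F)
        ((Algebra.TensorProduct.map (GroupAlgebra.comul A) (AlgHom.id ℂ _)) J) := by
    rw [← AlgHom.comp_apply, ← AlgHom.comp_apply, ← Algebra.TensorProduct.map_comp,
      ← Algebra.TensorProduct.map_comp, comul_comp, AlgHom.comp_id, AlgHom.id_comp]
  have h2 : (Algebra.TensorProduct.map (AlgHom.id ℂ _) (GroupAlgebra.comul G)) (F2 J) =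
      (Algebra.TensorProduct.map F F2)
        ((Algebra.TensorProduct.map (AlgHom.id ℂ _) (GroupAlgebra.comul A)) J) := by
    rw [← AlgHom.comp_apply, ← AlgHom.comp_apply, ← Algebra.TensorProduct.map_comp,
      ← Algebra.TensorProduct.map_comp, comul_comp, AlgHom.comp_id, AlgHom.id_comp]
  have h3 : (F2 J) ⊗ₜ[ℂ] (1 : MonoidAlgebra ℂ G) =
      (Algebra.TensorProduct.map F2 F) (J ⊗ₜ[ℂ] 1) := by
    simp [Algebra.TensorProduct.map_tmul]
  have h4 : (1 : MonoidAlgebra ℂ G) ⊗ₜ[ℂ] (F2 J) =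
      (Algebra.TensorProduct.map F F2) ((1 : MonoidAlgebra ℂ A) ⊗ₜ[ℂ] J) := by
    simp [Algebra.TensorProduct.map_tmul]
  rw [h1, h2, h3, h4, TwistAux.assoc_nat, TwistAux.assoc_nat, ← map_mul, hJ, map_mul]

lemma counitEq_map (hJ : GroupAlgebra.CounitEq A J) : GroupAlgebra.CounitEq G (F2 J) := by
  obtain ⟨hl, hr⟩ := hJ
  constructor
  · have h1 : (Algebra.TensorProduct.map (GroupAlgebra.counit G) (AlgHom.id ℂ _)) (F2 J) =
        (Algebra.TensorProduct.map (AlgHom.id ℂ ℂ) F)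
          ((Algebra.TensorProduct.map (GroupAlgebra.counit A) (AlgHom.id ℂ _)) J) := by
      rw [← AlgHom.comp_apply, ← AlgHom.comp_apply, ← Algebra.TensorProduct.map_comp,
        ← Algebra.TensorProduct.map_comp, counit_comp, AlgHom.comp_id, AlgHom.id_comp,
        AlgHom.id_comp]
    rw [h1, TwistAux.lid_nat, hl, map_one]
  · have h1 : (Algebra.TensorProduct.map (AlgHom.id ℂ _) (GroupAlgebra.counit G)) (F2 J) =
        (Algebra.TensorProduct.map F (AlgHom.id ℂ ℂ))
          ((Algebra.TensorProduct.map (AlgHom.id ℂ _) (GroupAlgebra.counit A)) J) := by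
      rw [← AlgHom.comp_apply, ← AlgHom.comp_apply, ← Algebra.TensorProduct.map_comp,
        ← Algebra.TensorProduct.map_comp, counit_comp, AlgHom.comp_id, AlgHom.id_comp,
        AlgHom.id_comp]
    rw [h1, TwistAux.rid_nat, hr, map_one]

end GroupHoms

section Semidirect

variable {K H : Type*} [Group K] [Group H] (φ : K →* MulAut H)

local notation "G" => H ⋊[φ] K
local notation "ιH" => MonoidAlgebra.mapDomainAlgHom ℂ ℂ (SemidirectProduct.inl : H →* H ⋊[φ] K)
local notation "ιK" => MonoidAlgebra.mapDomainAlgHom ℂ ℂ (SemidirectProduct.inr : K →* H ⋊[φ] K)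

lemma conj_single (k : K) (a : MonoidAlgebra ℂ H) :
    MonoidAlgebra.single (SemidirectProduct.inr k : G) (1:ℂ) * ιH a =
      ιH (MonoidAlgebra.mapDomain (⇑(φ k)) a) *
        MonoidAlgebra.single (SemidirectProduct.inr k : G) (1:ℂ) := by
  induction a using MonoidAlgebra.induction_linear with
  | zero => simp
  | add f g hf hg =>
      rw [MonoidAlgebra.mapDomain_add, map_add, map_add, add_mul, mul_add, hf, hg]
  | single h c =>
      rw [MonoidAlgebra.mapDomain_single, MonoidAlgebra.mapDomainAlgHom_apply,
        MonoidAlgebra.mapDomainAlgHom_apply, MonoidAlgebra.mapDomain_single, MonoidAlgebra.mapDomain_single,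
        MonoidAlgebra.single_mul_single, MonoidAlgebra.single_mul_single, one_mul, mul_one]
      congr 1
      rw [SemidirectProduct.inl_aut, mul_assoc, ← map_mul, inv_mul_cancel, map_one, mul_one]

lemma conj_tmul (k : K) (y : MonoidAlgebra ℂ H ⊗[ℂ] MonoidAlgebra ℂ H) :
    (MonoidAlgebra.single (SemidirectProduct.inr k : G) (1:ℂ) ⊗ₜ[ℂ]
        MonoidAlgebra.single (SemidirectProduct.inr k : G) (1:ℂ)) *
      Algebra.TensorProduct.map ιH ιH y =
    Algebra.TensorProduct.map ιH ιH
        (TensorProduct.map (MonoidAlgebra.mapDomainLinearMap ℂ ℂ (⇑(φ k))) (MonoidAlgebra.mapDomainLinearMap ℂ ℂ (⇑(φ k))) y) *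
      (MonoidAlgebra.single (SemidirectProduct.inr k : G) (1:ℂ) ⊗ₜ[ℂ]
        MonoidAlgebra.single (SemidirectProduct.inr k : G) (1:ℂ)) := by
  induction y with
  | zero => simp
  | tmul a b =>
      rw [TensorProduct.map_tmul, Algebra.TensorProduct.map_tmul, Algebra.TensorProduct.map_tmul,
        Algebra.TensorProduct.tmul_mul_tmul, Algebra.TensorProduct.tmul_mul_tmul,
        show (MonoidAlgebra.mapDomainLinearMap ℂ ℂ (⇑(φ k))) a = MonoidAlgebra.mapDomain (⇑(φ k)) a from rfl,
        show (MonoidAlgebra.mapDomainLinearMap ℂ ℂ (⇑(φ k))) b = MonoidAlgebra.mapDomain (⇑(φ k)) b from rfl,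
        conj_single, conj_single]
  | add x y hx hy => rw [map_add, map_add, map_add, mul_add, add_mul, hx, hy]

variable {JH : MonoidAlgebra ℂ H ⊗[ℂ] MonoidAlgebra ℂ H}
  (hinv : ∀ k : K,
      TensorProduct.map (GroupAlgebra.transport H H ⇑(φ k)) (GroupAlgebra.transport H H ⇑(φ k)) JH
        = JH)

local notation "JH'" => Algebra.TensorProduct.map
  (MonoidAlgebra.mapDomainAlgHom ℂ ℂ (SemidirectProduct.inl : H →* H ⋊[φ] K))
  (MonoidAlgebra.mapDomainAlgHom ℂ ℂ (SemidirectProduct.inl : H →* H ⋊[φ] K)) JH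

include hinv

lemma comm0 (a : MonoidAlgebra ℂ K) :
    Algebra.TensorProduct.map ιK ιK (GroupAlgebra.comul K a) * JH' =
      JH' * Algebra.TensorProduct.map ιK ιK (GroupAlgebra.comul K a) := by
  induction a using MonoidAlgebra.induction_linear with
  | zero => simp
  | add f g hf hg => rw [map_add, map_add, add_mul, mul_add, hf, hg]
  | single k c =>
      rw [comul_single, Algebra.TensorProduct.map_tmul, mapDomainAlgHom_single,
        mapDomainAlgHom_single,
        show MonoidAlgebra.single (SemidirectProduct.inr k : G) c
          = c • MonoidAlgebra.single (SemidirectProduct.inr k : G) (1:ℂ) by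
            rw [MonoidAlgebra.smul_single', mul_one],
        ← TensorProduct.smul_tmul', smul_mul_assoc, mul_smul_comm]
      congr 1
      have := conj_tmul φ k JH
      rw [show (TensorProduct.map (MonoidAlgebra.mapDomainLinearMap ℂ ℂ (⇑(φ k)))
          (MonoidAlgebra.mapDomainLinearMap ℂ ℂ (⇑(φ k))) JH) = JH from hinv k] at this
      exact this

lemma comm1 (z : MonoidAlgebra ℂ K ⊗[ℂ] MonoidAlgebra ℂ K) :
    Algebra.TensorProduct.map
        ((Algebra.TensorProduct.map ιK ιK).comp (GroupAlgebra.comul K)) ιK z *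
      (JH' ⊗ₜ[ℂ] (1 : MonoidAlgebra ℂ G)) =
    (JH' ⊗ₜ[ℂ] (1 : MonoidAlgebra ℂ G)) *
      Algebra.TensorProduct.map
        ((Algebra.TensorProduct.map ιK ιK).comp (GroupAlgebra.comul K)) ιK z := by
  induction z with
  | zero => simp
  | tmul a b =>
      rw [Algebra.TensorProduct.map_tmul, Algebra.TensorProduct.tmul_mul_tmul,
        Algebra.TensorProduct.tmul_mul_tmul, AlgHom.comp_apply, comm0 φ hinv, mul_one, one_mul]
  | add x y hx hy => rw [map_add, add_mul, mul_add, hx, hy]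

lemma comm2 (z : MonoidAlgebra ℂ K ⊗[ℂ] MonoidAlgebra ℂ K) :
    Algebra.TensorProduct.map ιK
        ((Algebra.TensorProduct.map ιK ιK).comp (GroupAlgebra.comul K)) z *
      ((1 : MonoidAlgebra ℂ G) ⊗ₜ[ℂ] JH') =
    ((1 : MonoidAlgebra ℂ G) ⊗ₜ[ℂ] JH') *
      Algebra.TensorProduct.map ιK
        ((Algebra.TensorProduct.map ιK ιK).comp (GroupAlgebra.comul K)) z := by
  induction z with
  | zero => simp
  | tmul a b =>
      rw [Algebra.TensorProduct.map_tmul, Algebra.TensorProduct.tmul_mul_tmul,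
        Algebra.TensorProduct.tmul_mul_tmul, AlgHom.comp_apply, comm0 φ hinv, mul_one, one_mul]
  | add x y hx hy => rw [map_add, add_mul, mul_add, hx, hy]

end Semidirect

end Aux

/-- **Proposition 2.4 (inductive step).** Let `K, H` be groups, `φ : K → Aut(H)` a homomorphism,
and `G = H ⋊_φ K`.  Let `J_K` be a twist for `ℂ[K]` and `J_H` a twist for `ℂ[H]` invariant under
`φ(K)`.  Regarding `J_K` and `J_H` as elements of `ℂ[G] ⊗ ℂ[G]` via the subgroup embeddings,
the product `J_H · J_K` is a twist for `ℂ[G]`. -/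
theorem twist_product_semidirect
    (K H : Type*) [Group K] [Group H] (φ : K →* MulAut H)
    (JK : MonoidAlgebra ℂ K ⊗[ℂ] MonoidAlgebra ℂ K)
    (JH : MonoidAlgebra ℂ H ⊗[ℂ] MonoidAlgebra ℂ H)
    (hJK : GroupAlgebra.IsTwist K JK) (hJH : GroupAlgebra.IsTwist H JH)
    (hinv : ∀ k : K,
      TensorProduct.map (GroupAlgebra.transport H H ⇑(φ k)) (GroupAlgebra.transport H H ⇑(φ k)) JH
        = JH) :
    GroupAlgebra.IsTwist (H ⋊[φ] K)
      ((Algebra.TensorProduct.map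
            (MonoidAlgebra.mapDomainAlgHom ℂ ℂ (SemidirectProduct.inl : H →* H ⋊[φ] K))
            (MonoidAlgebra.mapDomainAlgHom ℂ ℂ (SemidirectProduct.inl : H →* H ⋊[φ] K)) JH) *
        (Algebra.TensorProduct.map
            (MonoidAlgebra.mapDomainAlgHom ℂ ℂ (SemidirectProduct.inr : K →* H ⋊[φ] K))
            (MonoidAlgebra.mapDomainAlgHom ℂ ℂ (SemidirectProduct.inr : K →* H ⋊[φ] K)) JK)) := by
  obtain ⟨hKu, hKt, hKc⟩ := hJK
  obtain ⟨hHu, hHt, hHc⟩ := hJH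
  set G := H ⋊[φ] K
  set iH := MonoidAlgebra.mapDomainAlgHom ℂ ℂ (SemidirectProduct.inl : H →* G) with hiH
  set iK := MonoidAlgebra.mapDomainAlgHom ℂ ℂ (SemidirectProduct.inr : K →* G) with hiK
  set JH' := Algebra.TensorProduct.map iH iH JH with hJH'
  set JK' := Algebra.TensorProduct.map iK iK JK with hJK'
  have hHt' : GroupAlgebra.TwistEq G JH' := twistEq_map _ hHt
  have hKt' : GroupAlgebra.TwistEq G JK' := twistEq_map _ hKt
  have hHc' : GroupAlgebra.CounitEq G JH' := counitEq_map _ hHc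
  have hKc' : GroupAlgebra.CounitEq G JK' := counitEq_map _ hKc
  refine ⟨(hHu.map (Algebra.TensorProduct.map iH iH)).mul
    (hKu.map (Algebra.TensorProduct.map iK iK)), ?_, ?_, ?_⟩
  · -- TwistEq
    unfold GroupAlgebra.TwistEq at hHt' hKt' ⊢
    set Δ := GroupAlgebra.comul G
    set m1 := Algebra.TensorProduct.map Δ (AlgHom.id ℂ (MonoidAlgebra ℂ G))
    set m2 := Algebra.TensorProduct.map (AlgHom.id ℂ (MonoidAlgebra ℂ G)) Δ
    set as := Algebra.TensorProduct.assoc ℂ ℂ ℂ (MonoidAlgebra ℂ G) (MonoidAlgebra ℂ G)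
      (MonoidAlgebra ℂ G)
    have e1 : m1 JK' = Algebra.TensorProduct.map
        ((Algebra.TensorProduct.map iK iK).comp (GroupAlgebra.comul K)) iK JK := by
      rw [hJK', ← AlgHom.comp_apply, ← Algebra.TensorProduct.map_comp]
      rw [show Δ.comp iK = (Algebra.TensorProduct.map iK iK).comp (GroupAlgebra.comul K) from
          comul_comp _,
        show (AlgHom.id ℂ (MonoidAlgebra ℂ G)).comp iK = iK from AlgHom.id_comp _]
    have e2 : m2 JK' = Algebra.TensorProduct.map iK
        ((Algebra.TensorProduct.map iK iK).comp (GroupAlgebra.comul K)) JK := by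
      rw [hJK', ← AlgHom.comp_apply, ← Algebra.TensorProduct.map_comp]
      rw [show Δ.comp iK = (Algebra.TensorProduct.map iK iK).comp (GroupAlgebra.comul K) from
          comul_comp _,
        show (AlgHom.id ℂ (MonoidAlgebra ℂ G)).comp iK = iK from AlgHom.id_comp _]
    have c1 : m1 JK' * (JH' ⊗ₜ[ℂ] (1 : MonoidAlgebra ℂ G)) =
        (JH' ⊗ₜ[ℂ] (1 : MonoidAlgebra ℂ G)) * m1 JK' := by
      rw [e1]; exact comm1 φ hinv JK
    have c2 : (1 : MonoidAlgebra ℂ G) ⊗ₜ[ℂ] JH' * m2 JK' =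
        m2 JK' * ((1 : MonoidAlgebra ℂ G) ⊗ₜ[ℂ] JH') := by
      rw [e2]; exact (comm2 φ hinv JK).symm
    have tm : (JH' * JK') ⊗ₜ[ℂ] (1 : MonoidAlgebra ℂ G) =
        (JH' ⊗ₜ[ℂ] (1 : MonoidAlgebra ℂ G)) * (JK' ⊗ₜ[ℂ] (1 : MonoidAlgebra ℂ G)) := by
      rw [Algebra.TensorProduct.tmul_mul_tmul, one_mul]
    have tm2 : (1 : MonoidAlgebra ℂ G) ⊗ₜ[ℂ] (JH' * JK') =
        ((1 : MonoidAlgebra ℂ G) ⊗ₜ[ℂ] JH') * ((1 : MonoidAlgebra ℂ G) ⊗ₜ[ℂ] JK') := by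
      rw [Algebra.TensorProduct.tmul_mul_tmul, one_mul]
    calc as (m1 (JH' * JK')) * as ((JH' * JK') ⊗ₜ[ℂ] (1 : MonoidAlgebra ℂ G))
        = as (m1 JH' * m1 JK' *
            ((JH' ⊗ₜ[ℂ] (1 : MonoidAlgebra ℂ G)) * (JK' ⊗ₜ[ℂ] (1 : MonoidAlgebra ℂ G)))) := by
          rw [map_mul m1, tm, ← map_mul]
      _ = as (m1 JH' * (JH' ⊗ₜ[ℂ] (1 : MonoidAlgebra ℂ G)) *
            (m1 JK' * (JK' ⊗ₜ[ℂ] (1 : MonoidAlgebra ℂ G)))) := by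
          rw [TwistAux.swap_middle _ _ _ _ c1]
      _ = (as (m1 JH') * as (JH' ⊗ₜ[ℂ] (1 : MonoidAlgebra ℂ G))) *
            (as (m1 JK') * as (JK' ⊗ₜ[ℂ] (1 : MonoidAlgebra ℂ G))) := by
          rw [map_mul, map_mul, map_mul]
      _ = (m2 JH' * ((1 : MonoidAlgebra ℂ G) ⊗ₜ[ℂ] JH')) *
            (m2 JK' * ((1 : MonoidAlgebra ℂ G) ⊗ₜ[ℂ] JK')) := by rw [hHt', hKt']
      _ = m2 JH' * m2 JK' *
            (((1 : MonoidAlgebra ℂ G) ⊗ₜ[ℂ] JH') * ((1 : MonoidAlgebra ℂ G) ⊗ₜ[ℂ] JK')) := by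
          rw [TwistAux.swap_middle _ _ _ _ c2]
      _ = m2 (JH' * JK') * ((1 : MonoidAlgebra ℂ G) ⊗ₜ[ℂ] (JH' * JK')) := by
          rw [map_mul, tm2]
  · -- CounitEq left
    obtain ⟨hl1, _⟩ := hHc'
    obtain ⟨hl2, _⟩ := hKc'
    rw [map_mul, map_mul, hl1, hl2, one_mul]
  · -- CounitEq right
    obtain ⟨_, hr1⟩ := hHc'
    obtain ⟨_, hr2⟩ := hKc'
    rw [map_mul, map_mul, hr1, hr2, one_mul]
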